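/- For all real numbers x, y, z, the function x ↦ ℛ(x,y,z) is differentiable and its derivative in x equals (1/2)·(H(z, x+y) + H(z, x−y)). -/

import Mathlib

/-!
Statement 11: the McShane–Mirzakhani function `ℛ(x,y,z)` is differentiable in `x` with
`∂ℛ/∂x = (1/2)(H(z, x+y) + H(z, x−y))`.
-/

noncomputable section

/-- The McShane–Mirzakhani function
`ℛ(x,y,z) = x − log((cosh(y/2) + cosh((x+z)/2))/(cosh(y/2) + cosh((x−z)/2)))`. -/
def Rfun (x y z : ℝ) : ℝ :=
  x - Real.log ((Real.cosh (y / 2) + Real.cosh ((x + z) / 2)) /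
      (Real.cosh (y / 2) + Real.cosh ((x - z) / 2)))

/-- The kernel `H(x,y) = 1/(1 + e^{(x+y)/2}) + 1/(1 + e^{(x−y)/2})`. -/
def Hker (x y : ℝ) : ℝ :=
  1 / (1 + Real.exp ((x + y) / 2)) + 1 / (1 + Real.exp ((x - y) / 2))

lemma key_identity (a b c : ℝ) (ha : 0 < a) (hb : 0 < b) (hc : 0 < c) :
    1 - ((a * c - (a * c)⁻¹) / 2 * (1 / 2) / ((b + b⁻¹) / 2 + (a * c + (a * c)⁻¹) / 2)
       - (a * c⁻¹ - (a * c⁻¹)⁻¹) / 2 * (1 / 2) / ((b + b⁻¹) / 2 + (a * c⁻¹ + (a * c⁻¹)⁻¹) / 2))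
    = (1 / 2) * ((1 / (1 + c * (a * b)) + 1 / (1 + c * (a * b)⁻¹))
               + (1 / (1 + c * (a * b⁻¹)) + 1 / (1 + c * (a⁻¹ * b)))) := by
  have ha' := ha.ne'
  have hb' := hb.ne'
  have hc' := hc.ne'
  have h1 : (0:ℝ) < (b + b⁻¹) / 2 + (a * c + (a * c)⁻¹) / 2 := by positivity
  have h2 : (0:ℝ) < (b + b⁻¹) / 2 + (a * c⁻¹ + (a * c⁻¹)⁻¹) / 2 := by positivity
  have h3 : (0:ℝ) < 1 + c * (a * b) := by positivity
  have h4 : (0:ℝ) < 1 + c * (a * b)⁻¹ := by positivity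
  have h5 : (0:ℝ) < 1 + c * (a * b⁻¹) := by positivity
  have h6 : (0:ℝ) < 1 + c * (a⁻¹ * b) := by positivity
  field_simp
  ring

/-- For all `x, y, z`, the function `x ↦ ℛ(x,y,z)` has derivative
`(1/2)(H(z, x+y) + H(z, x−y))` at `x`. -/
theorem Rfun_hasDerivAt (x y z : ℝ) :
    HasDerivAt (fun u : ℝ => Rfun u y z)
      ((1 / 2) * (Hker z (x + y) + Hker z (x - y))) x := by
  have hApos : ∀ u : ℝ, 0 < Real.cosh (y / 2) + Real.cosh ((u + z) / 2) := fun u =>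
    add_pos (Real.cosh_pos _) (Real.cosh_pos _)
  have hBpos : ∀ u : ℝ, 0 < Real.cosh (y / 2) + Real.cosh ((u - z) / 2) := fun u =>
    add_pos (Real.cosh_pos _) (Real.cosh_pos _)
  have h1 : HasDerivAt (fun u : ℝ => (u + z) / 2) (1 / 2) x := by
    simpa using ((hasDerivAt_id x).add_const z).div_const 2
  have h2 : HasDerivAt (fun u : ℝ => (u - z) / 2) (1 / 2) x := by
    simpa using ((hasDerivAt_id x).sub_const z).div_const 2
  have hA : HasDerivAt (fun u : ℝ => Real.cosh (y / 2) + Real.cosh ((u + z) / 2))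
      (Real.sinh ((x + z) / 2) * (1 / 2)) x := (h1.cosh).const_add _
  have hB : HasDerivAt (fun u : ℝ => Real.cosh (y / 2) + Real.cosh ((u - z) / 2))
      (Real.sinh ((x - z) / 2) * (1 / 2)) x := (h2.cosh).const_add _
  have hlogA := hA.log (hApos x).ne'
  have hlogB := hB.log (hBpos x).ne'
  have h := (hasDerivAt_id x).sub (hlogA.sub hlogB)
  have heq : (fun u : ℝ => Rfun u y z) =
      fun u : ℝ => u - (Real.log (Real.cosh (y / 2) + Real.cosh ((u + z) / 2))
        - Real.log (Real.cosh (y / 2) + Real.cosh ((u - z) / 2))) := by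
    funext u
    rw [Rfun, Real.log_div (hApos u).ne' (hBpos u).ne']
  rw [heq]
  refine h.congr_deriv ?_
  -- now prove the value identity
  have ea : (0:ℝ) < Real.exp (x / 2) := Real.exp_pos _
  have eb : (0:ℝ) < Real.exp (y / 2) := Real.exp_pos _
  have ec : (0:ℝ) < Real.exp (z / 2) := Real.exp_pos _
  have key := key_identity (Real.exp (x / 2)) (Real.exp (y / 2)) (Real.exp (z / 2)) ea eb ec
  have e1 : Real.exp ((x + z) / 2) = Real.exp (x / 2) * Real.exp (z / 2) := by
    rw [← Real.exp_add]; ring_nf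
  have e2 : Real.exp ((x - z) / 2) = Real.exp (x / 2) * (Real.exp (z / 2))⁻¹ := by
    rw [← Real.exp_neg, ← Real.exp_add]; ring_nf
  have e3 : Real.exp ((z + (x + y)) / 2) = Real.exp (z / 2) * (Real.exp (x / 2) * Real.exp (y / 2)) := by
    rw [← Real.exp_add, ← Real.exp_add]; ring_nf
  have e4 : Real.exp ((z - (x + y)) / 2) = Real.exp (z / 2) * (Real.exp (x / 2) * Real.exp (y / 2))⁻¹ := by
    rw [mul_inv, ← Real.exp_neg, ← Real.exp_neg, ← Real.exp_add, ← Real.exp_add]; ring_nf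
  have e5 : Real.exp ((z + (x - y)) / 2) = Real.exp (z / 2) * (Real.exp (x / 2) * (Real.exp (y / 2))⁻¹) := by
    rw [← Real.exp_neg, ← Real.exp_add, ← Real.exp_add]; ring_nf
  have e6 : Real.exp ((z - (x - y)) / 2) = Real.exp (z / 2) * ((Real.exp (x / 2))⁻¹ * Real.exp (y / 2)) := by
    rw [← Real.exp_neg, ← Real.exp_add, ← Real.exp_add]; ring_nf
  simp only [Hker, Real.cosh_eq, Real.sinh_eq, e1, e2, e3, e4, e5, e6]
  rw [show Real.exp (-((x+z)/2)) = (Real.exp (x/2) * Real.exp (z/2))⁻¹ by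
        rw [← Real.exp_add, ← Real.exp_neg]; ring_nf,
      show Real.exp (-((x-z)/2)) = (Real.exp (x/2) * (Real.exp (z/2))⁻¹)⁻¹ by
        rw [← Real.exp_neg, ← Real.exp_add, ← Real.exp_neg]; ring_nf,
      show Real.exp (-(y/2)) = (Real.exp (y/2))⁻¹ from Real.exp_neg _]
  linarith [key]

end
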